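/- Let (D,W) be a consistent NMU default theory of tightness c and let L be a set of literals in W. Then every minimal strong outlier witness set S for L in (D,W) has size at most c. -/

import Mathlib

/-! Propositional formulas -/

inductive Form (V : Type) : Type
  | atom : V → Form V
  | tru  : Form V
  | fals : Form V
  | neg  : Form V → Form V
  | conj : Form V → Form V → Form V
  | disj : Form V → Form V → Form V

/-- Satisfaction of a formula by a valuation. -/
def Form.sat {V : Type} (v : V → Prop) : Form V → Prop
  | .atom a => v a
  | .tru => True
  | .fals => False
  | .neg φ => ¬ Form.sat v φ
  | .conj φ ψ => Form.sat v φ ∧ Form.sat v ψ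
  | .disj φ ψ => Form.sat v φ ∨ Form.sat v ψ

/-- Logical logClosure `T*` of a set of formulas. -/
def logClosure {V : Type} (T : Set (Form V)) : Set (Form V) :=
  { φ | ∀ v : V → Prop, (∀ ψ ∈ T, Form.sat v ψ) → Form.sat v φ }

/-- A default rule `α : β₁,…,β_m / γ` (`pre = none` means the prerequisite is missing). -/
structure Default (V : Type) : Type where
  pre   : Option (Form V)
  justs : List (Form V)
  concl : Form V

/-- The stage sets `E_i` relative to a candidate extension `E`:
`E_0 = W`, `E_{i+1} = E_i* ∪ {γ | α:β₁,…,β_m/γ ∈ D, α ∈ E_i, ¬β₁ ∉ E, …, ¬β_m ∉ E}`. -/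
def extStage {V : Type} (D : Set (Default V)) (W : Set (Form V)) (E : Set (Form V)) :
    ℕ → Set (Form V)
  | 0 => W
  | i + 1 =>
      logClosure (extStage D W E i) ∪
        { φ | ∃ d ∈ D, d.concl = φ ∧ (∀ a ∈ d.pre, a ∈ extStage D W E i) ∧
              ∀ b ∈ d.justs, Form.neg b ∉ E }

/-- `E` is an extension of the default theory `(D, W)`. -/
def IsExtension {V : Type} (D : Set (Default V)) (W : Set (Form V)) (E : Set (Form V)) : Prop :=
  E = ⋃ i, extStage D W E i

/-- `(D, W) ⊨ φ`: every extension of `(D, W)` contains `φ`. -/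
def entails {V : Type} (D : Set (Default V)) (W : Set (Form V)) (φ : Form V) : Prop :=
  ∀ E, IsExtension D W E → φ ∈ E

/-! Literals -/

/-- A literal: a letter together with a sign (`pos = true` means a positive literal). -/
structure Lit (V : Type) : Type where
  letter : V
  pos : Bool

/-- The formula corresponding to a literal. -/
def Lit.toForm {V : Type} (l : Lit V) : Form V :=
  if l.pos then Form.atom l.letter else Form.neg (Form.atom l.letter)

/-- Negation of a literal (so that `¬¬a = a`). -/
def Lit.negate {V : Type} (l : Lit V) : Lit V := ⟨l.letter, !l.pos⟩

/-- A set of literals is consistent if it contains no complementary pair. -/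
def LitConsistent {V : Type} (S : Set (Lit V)) : Prop := ∀ l ∈ S, l.negate ∉ S

/-! Normal mixed unary (NMU) default theories -/

/-- An NMU default `α : β / β` with `α` empty or a single literal and `β` a single literal. -/
structure NMUDefault (V : Type) : Type where
  pre : Option (Lit V)
  concl : Lit V

/-- The general default rule corresponding to an NMU default. -/
def NMUDefault.toDefault {V : Type} (d : NMUDefault V) : Default V :=
  ⟨d.pre.map Lit.toForm, [d.concl.toForm], d.concl.toForm⟩

/-- `E` is an extension of the NMU theory `(D, W)`. -/
def NMU.IsExtension {V : Type} (D : Set (NMUDefault V)) (W : Set (Lit V))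
    (E : Set (Form V)) : Prop :=
  _root_.IsExtension (NMUDefault.toDefault '' D) (Lit.toForm '' W) E

/-- The NMU theory `(D, W)` entails the literal `l`. -/
def NMU.entails {V : Type} (D : Set (NMUDefault V)) (W : Set (Lit V)) (l : Lit V) : Prop :=
  _root_.entails (NMUDefault.toDefault '' D) (Lit.toForm '' W) l.toForm

/-- An NMU theory is normal unary (NU) if every nonempty prerequisite is positive. -/
def IsNU {V : Type} (D : Set (NMUDefault V)) : Prop :=
  ∀ d ∈ D, ∀ p ∈ d.pre, p.pos = true

/-! Atomic dependency graph -/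

/-- Edge `(x, y)` of the atomic dependency graph: `x` occurs in the prerequisite and `y`
in the consequent of some default of `D`. -/
def depEdge {V : Type} (D : Set (NMUDefault V)) (x y : V) : Prop :=
  ∃ d ∈ D, (∃ p ∈ d.pre, p.letter = x) ∧ d.concl.letter = y

/-- There is a path from `x` to `y` in the atomic dependency graph. -/
def depReach {V : Type} (D : Set (NMUDefault V)) : V → V → Prop :=
  Relation.ReflTransGen (depEdge D)

/-- A set of literals `S` influences a literal `l`. -/
def influences {V : Type} (D : Set (NMUDefault V)) (S : Set (Lit V)) (l : Lit V) : Prop :=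
  ∃ t ∈ S, depReach D t.letter l.letter

/-- `S` is an outlier witness set for `L` in the NMU theory `(D, W)`. -/
def NMUWitness {V : Type} (D : Set (NMUDefault V)) (W L S : Set (Lit V)) : Prop :=
  S.Nonempty ∧ S ⊆ W \ L ∧
  (∀ l ∈ S, NMU.entails D (W \ S) l.negate) ∧
  ¬ (∀ l ∈ S, NMU.entails D (W \ (S ∪ L)) l.negate)

/-- `S` is a strong outlier witness set for `L` in the NMU theory `(D, W)`. -/
def NMUStrongWitness {V : Type} (D : Set (NMUDefault V)) (W L S : Set (Lit V)) : Prop :=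
  S.Nonempty ∧ S ⊆ W \ L ∧
  (∀ l ∈ S, NMU.entails D (W \ S) l.negate) ∧
  (∀ l ∈ S, ¬ NMU.entails D (W \ (S ∪ L)) l.negate)

/-- The letter `a` occurs in the NMU theory `(D, W)`. -/
def occursIn {V : Type} (D : Set (NMUDefault V)) (W : Set (Lit V)) (a : V) : Prop :=
  (∃ l ∈ W, l.letter = a) ∨ ∃ d ∈ D, d.concl.letter = a ∨ ∃ p ∈ d.pre, p.letter = a

/-! ### Auxiliary: combinatorial fixpoint characterization -/

namespace OWAux

variable {V : Type}

lemma Lit.negate_negate (l : Lit V) : l.negate.negate = l := by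
  cases l with
  | mk a b => simp [Lit.negate]

lemma Lit.negate_ne (l : Lit V) : l.negate ≠ l := by
  cases l with
  | mk a b => simp [Lit.negate]

@[simp] lemma Lit.negate_letter (l : Lit V) : l.negate.letter = l.letter := rfl

/-- Combinatorial derivation stages. -/
def gen (D : Set (NMUDefault V)) (W M : Set (Lit V)) : ℕ → Set (Lit V)
  | 0 => W
  | i + 1 => gen D W M i ∪
      {l | ∃ d ∈ D, d.concl = l ∧ (∀ p ∈ d.pre, p ∈ gen D W M i) ∧ l.negate ∉ M}

/-- `M` is a (combinatorial) fixpoint of the NMU theory `(D, W)`. -/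
def Fix (D : Set (NMUDefault V)) (W M : Set (Lit V)) : Prop :=
  M = ⋃ i, gen D W M i

variable {D : Set (NMUDefault V)} {W M : Set (Lit V)}

lemma gen_mono : Monotone (gen D W M) := by
  apply monotone_nat_of_le_succ
  intro i
  exact Set.subset_union_left

lemma Fix.w_subset (h : Fix D W M) : W ⊆ M := by
  rw [h]; exact Set.subset_iUnion_of_subset 0 (by rfl)

lemma Fix.mem_iff (h : Fix D W M) {l : Lit V} : l ∈ M ↔ ∃ i, l ∈ gen D W M i := by
  conv_lhs => rw [h]
  simp

lemma Fix.closed (h : Fix D W M) {d : NMUDefault V} (hd : d ∈ D)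
    (hp : ∀ p ∈ d.pre, p ∈ M) (hn : d.concl.negate ∉ M) : d.concl ∈ M := by
  have : ∃ i, ∀ p ∈ d.pre, p ∈ gen D W M i := by
    cases hpre : d.pre with
    | none => exact ⟨0, by simp [hpre]⟩
    | some p =>
      have hpM : p ∈ M := hp p (by simp [hpre])
      obtain ⟨i, hi⟩ := h.mem_iff.1 hpM
      exact ⟨i, by simp [hpre]; exact hi⟩
  obtain ⟨i, hi⟩ := this
  exact h.mem_iff.2 ⟨i + 1, Or.inr ⟨d, hd, rfl, hi, hn⟩⟩

lemma gen_added {i : ℕ} {l : Lit V} (hl : l ∈ gen D W M i) : l ∈ W ∨ l.negate ∉ M := by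
  induction i with
  | zero => exact Or.inl hl
  | succ i ih =>
    rcases hl with hl | ⟨d, _, rfl, _, hn⟩
    · exact ih hl
    · exact Or.inr hn

lemma Fix.consistent (h : Fix D W M) (hW : LitConsistent W) : LitConsistent M := by
  intro l hl hnl
  obtain ⟨i, hi⟩ := h.mem_iff.1 hl
  obtain ⟨j, hj⟩ := h.mem_iff.1 hnl
  rcases gen_added hi with hW1 | hn1
  · rcases gen_added hj with hW2 | hn2
    · exact hW l hW1 hW2
    · rw [Lit.negate_negate] at hn2; exact hn2 hl
  · exact hn1 hnl

lemma gen_range {i : ℕ} {l : Lit V} (hl : l ∈ gen D W M i) :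
    l ∈ W ∨ ∃ d ∈ D, d.concl = l := by
  induction i with
  | zero => exact Or.inl hl
  | succ i ih =>
    rcases hl with hl | ⟨d, hd, rfl, _, _⟩
    · exact ih hl
    · exact Or.inr ⟨d, hd, rfl⟩

lemma Fix.range (h : Fix D W M) {l : Lit V} (hl : l ∈ M) :
    l ∈ W ∨ ∃ d ∈ D, d.concl = l := by
  obtain ⟨i, hi⟩ := h.mem_iff.1 hl
  exact gen_range hi

end OWAux
namespace OWAux

variable {V : Type}

open Classical in
/-- One greedy step. -/
noncomputable def gstep (D : Set (NMUDefault V)) (S : Set (Lit V)) : Set (Lit V) :=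
  if h : ∃ d, d ∈ D ∧ (∀ p ∈ d.pre, p ∈ S) ∧ d.concl ∉ S ∧ d.concl.negate ∉ S
  then S ∪ {h.choose.concl}
  else S

/-- Greedy construction of a fixpoint. -/
noncomputable def greedy (D : Set (NMUDefault V)) (W : Set (Lit V)) : ℕ → Set (Lit V)
  | 0 => W
  | n + 1 => gstep D (greedy D W n)

variable {D : Set (NMUDefault V)} {W : Set (Lit V)}

lemma gstep_subset (S : Set (Lit V)) : S ⊆ gstep D S := by
  rw [gstep]
  split
  · exact Set.subset_union_left
  · exact subset_rfl

lemma greedy_succ_subset (n : ℕ) : greedy D W n ⊆ greedy D W (n + 1) := by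
  rw [greedy]
  exact gstep_subset _

lemma greedy_mono : Monotone (greedy D W) :=
  monotone_nat_of_le_succ greedy_succ_subset

lemma greedy_subset (n : ℕ) : greedy D W n ⊆ W ∪ {l | ∃ d ∈ D, d.concl = l} := by
  induction n with
  | zero => exact Set.subset_union_left
  | succ n ih =>
    rw [greedy, gstep]
    split
    case isTrue h =>
      rintro l (hl | hl)
      · exact ih hl
      · exact Or.inr ⟨h.choose, h.choose_spec.1, hl.symm⟩
    case isFalse => exact ih

lemma greedy_stab {n : ℕ} (h : greedy D W (n + 1) = greedy D W n) :
    ∀ m, n ≤ m → greedy D W m = greedy D W n := by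
  intro m hm
  induction m with
  | zero =>
    have : n = 0 := Nat.le_zero.mp hm
    rw [this]
  | succ m ih =>
    rcases Nat.eq_or_lt_of_le hm with h1 | h1
    · rw [← h1]
    · have hmn : n ≤ m := by omega
      have hgm := ih hmn
      have h2 : greedy D W (m + 1) = gstep D (greedy D W m) := by rw [greedy]
      have h3 : greedy D W (n + 1) = gstep D (greedy D W n) := by rw [greedy]
      rw [h2, hgm, ← h3, h]

lemma exists_stable (hD : D.Finite) : ∃ n, greedy D W (n + 1) = greedy D W n := by
  by_contra hc
  push_neg at hc
  set C : Set (Lit V) := {l | ∃ d ∈ D, d.concl = l} with hC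
  have hCfin : C.Finite := by
    have : C = NMUDefault.concl '' D := by
      ext l; simp [hC, eq_comm]
    rw [this]; exact hD.image _
  have hstep : ∀ n, ∃ l ∈ C, l ∉ greedy D W n ∧ l ∈ greedy D W (n + 1) := by
    intro n
    have halt : greedy D W (n + 1) = greedy D W n ∨
        ∃ l ∈ C, l ∉ greedy D W n ∧ l ∈ greedy D W (n + 1) := by
      rw [greedy, gstep]
      split
      case isTrue h =>
        exact Or.inr ⟨h.choose.concl, ⟨h.choose, h.choose_spec.1, rfl⟩,
          h.choose_spec.2.2.1, Or.inr rfl⟩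
      case isFalse h => exact Or.inl rfl
    rcases halt with halt | halt
    · exact absurd halt (hc n)
    · exact halt
  set k : ℕ → ℕ := fun n => (greedy D W n ∩ C).ncard with hk
  have hfin : ∀ n, (greedy D W n ∩ C).Finite := fun n => hCfin.subset Set.inter_subset_right
  have hkmono : StrictMono k := by
    apply strictMono_nat_of_lt_succ
    intro n
    obtain ⟨l, hlC, hl1, hl2⟩ := hstep n
    apply Set.ncard_lt_ncard
    · constructor
      · exact Set.inter_subset_inter_left _ (greedy_succ_subset n)
      · intro hsub
        exact hl1 (hsub ⟨hl2, hlC⟩).1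
    · exact hfin _
  have hbound : ∀ n, k n ≤ C.ncard := fun n =>
    Set.ncard_le_ncard Set.inter_subset_right hCfin
  have h1 : C.ncard + 1 ≤ k (C.ncard + 1) := hkmono.le_apply
  have h2 := hbound (C.ncard + 1)
  omega

/-- Every finite NMU default set has a fixpoint over any `W`. -/
theorem exists_fix (hD : D.Finite) (W : Set (Lit V)) : ∃ M, Fix D W M := by
  obtain ⟨N, hN⟩ := exists_stable (W := W) hD
  set M : Set (Lit V) := greedy D W N with hM
  have hstab : ∀ m, N ≤ m → greedy D W m = M := greedy_stab hN
  have hWM : W ⊆ M := greedy_mono (Nat.zero_le N)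
  -- literals added at step n have their negation never appearing
  have hadded : ∀ n l, l ∈ greedy D W (n + 1) → l ∉ greedy D W n →
      ∀ m, l.negate ∉ greedy D W m := by
    intro n l hl1 hl0
    -- identify l as the chosen conclusion
    have hchoose : ∃ h : (∃ d, d ∈ D ∧ (∀ p ∈ d.pre, p ∈ greedy D W n) ∧
        d.concl ∉ greedy D W n ∧ d.concl.negate ∉ greedy D W n),
        l = h.choose.concl := by
      rw [greedy, gstep] at hl1
      split at hl1
      case isTrue h =>
        rcases hl1 with hl1 | hl1
        · exact absurd hl1 hl0
        · exact ⟨h, hl1⟩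
      case isFalse => exact absurd hl1 hl0
    obtain ⟨hex, hleq⟩ := hchoose
    have hlneg : l.negate ∉ greedy D W n := hleq ▸ hex.choose_spec.2.2.2
    by_contra hcon
    push_neg at hcon
    obtain ⟨m, hm⟩ := hcon
    -- take the least such m
    classical
    have hexm : ∃ m, l.negate ∈ greedy D W m := ⟨m, hm⟩
    have hmem : l.negate ∈ greedy D W (Nat.find hexm) := Nat.find_spec hexm
    have hm0n : n < Nat.find hexm := by
      by_contra hle
      push_neg at hle
      exact hlneg (greedy_mono hle hmem)
    obtain ⟨m1, hm1⟩ : ∃ m1, Nat.find hexm = m1 + 1 := ⟨Nat.find hexm - 1, by omega⟩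
    rw [hm1] at hmem
    have hnotm1 : l.negate ∉ greedy D W m1 := Nat.find_min hexm (by omega)
    -- l.negate was added at step m1
    have hchoose2 : ∃ h : (∃ d, d ∈ D ∧ (∀ p ∈ d.pre, p ∈ greedy D W m1) ∧
        d.concl ∉ greedy D W m1 ∧ d.concl.negate ∉ greedy D W m1),
        l.negate = h.choose.concl := by
      rw [greedy, gstep] at hmem
      split at hmem
      case isTrue h =>
        rcases hmem with hmem | hmem
        · exact absurd hmem hnotm1
        · exact ⟨h, hmem⟩
      case isFalse => exact absurd hmem hnotm1
    obtain ⟨hex2, hleq2⟩ := hchoose2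
    have : l ∉ greedy D W m1 := by
      have := hex2.choose_spec.2.2.2
      rw [← hleq2, Lit.negate_negate] at this
      exact this
    have hnm1 : n + 1 ≤ m1 := by
      rcases Nat.lt_or_ge m1 (n+1) with h1 | h1
      · -- m1 ≤ n: l.negate ∈ greedy (m1+1) ⊆ greedy (n+1); but also, l added at n...
        have hm1n : m1 = n := by omega
        subst hm1n
        -- at step n the chosen default is unique; l and l.negate both equal it
        have h1 : l = hex.choose.concl := hleq
        have h2 : l.negate = hex.choose.concl := hleq2
        exact (Lit.negate_ne l (h2.trans h1.symm)).elim
      · exact h1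
    exact this (greedy_mono hnm1 hl1)
  -- M is a fixpoint
  refine ⟨M, ?_⟩
  have hMeq : M = ⋃ n, greedy D W n := by
    apply Set.eq_of_subset_of_subset
    · exact Set.subset_iUnion (greedy D W) N
    · apply Set.iUnion_subset
      intro n
      rcases Nat.lt_or_ge N n with h1 | h1
      · rw [hstab n (by omega)]
      · exact greedy_mono h1
  -- soundness: greedy n ⊆ ⋃ gen
  have hsound : ∀ n, greedy D W n ⊆ ⋃ i, gen D W M i := by
    intro n
    induction n with
    | zero =>
      have e1 : greedy D W 0 = W := by rw [greedy]
      have e2 : gen D W M 0 = W := by rw [gen]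
      rw [e1]
      exact Set.subset_iUnion_of_subset 0 (by rw [e2])
    | succ n ih =>
      intro l hl
      by_cases hl0 : l ∈ greedy D W n
      · exact ih hl0
      · have hchoose : ∃ h : (∃ d, d ∈ D ∧ (∀ p ∈ d.pre, p ∈ greedy D W n) ∧
            d.concl ∉ greedy D W n ∧ d.concl.negate ∉ greedy D W n),
            l = h.choose.concl := by
          rw [greedy, gstep] at hl
          split at hl
          case isTrue h =>
            rcases hl with hl | hl
            · exact absurd hl hl0
            · exact ⟨h, hl⟩
          case isFalse => exact absurd hl hl0
        obtain ⟨hex, hleq⟩ := hchoose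
        obtain ⟨hd, hpre, hncl, hneg⟩ := hex.choose_spec
        have hnegM : l.negate ∉ M := by
          intro hcon
          have : l.negate ∈ ⋃ n, greedy D W n := hMeq ▸ hcon
          simp only [Set.mem_iUnion] at this
          obtain ⟨m, hm⟩ := this
          exact hadded n l hl hl0 m hm
        -- find a stage for the prerequisites
        have : ∃ i, ∀ p ∈ hex.choose.pre, p ∈ gen D W M i := by
          cases hpre2 : hex.choose.pre with
          | none => exact ⟨0, by simp [hpre2]⟩
          | some p =>
            have hpg : p ∈ greedy D W n := hpre p (by simp [hpre2])
            have := ih hpg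
            simp only [Set.mem_iUnion] at this
            obtain ⟨i, hi⟩ := this
            exact ⟨i, by simp [hpre2]; exact hi⟩
        obtain ⟨i, hi⟩ := this
        have : l ∈ gen D W M (i + 1) := Or.inr ⟨hex.choose, hd, hleq.symm, hi, hleq ▸ hnegM⟩
        exact Set.mem_iUnion.2 ⟨i + 1, this⟩
  apply Set.eq_of_subset_of_subset
  · exact hsound N
  · apply Set.iUnion_subset
    intro i
    induction i with
    | zero => exact hWM
    | succ i ih =>
      rintro l (hl | ⟨d, hd, rfl, hp, hn⟩)
      · exact ih hl
      · -- closure of M under applicable defaults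
        by_contra hlM
        -- then the greedy condition holds at stage N, contradicting stability
        have hcond : ∃ d', d' ∈ D ∧ (∀ p ∈ d'.pre, p ∈ greedy D W N) ∧
            d'.concl ∉ greedy D W N ∧ d'.concl.negate ∉ greedy D W N := by
          refine ⟨d, hd, fun p hp' => ih (hp p hp'), hlM, hn⟩
        have heq : greedy D W (N + 1) = greedy D W N ∪ {hcond.choose.concl} := by
          rw [greedy, gstep]
          split
          case isTrue h => rfl
          case isFalse h => exact absurd hcond h
        have hmem2 : hcond.choose.concl ∈ greedy D W N ∪ {hcond.choose.concl} :=
          Or.inr rfl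
        rw [← heq, hN] at hmem2
        exact hcond.choose_spec.2.2.1 hmem2

end OWAux
namespace OWAux

variable {V : Type} {D : Set (NMUDefault V)} {W M : Set (Lit V)} {R : Set V}

/-- Restriction of a set of literals to letters in `R`. -/
def restrict (R : Set V) (M : Set (Lit V)) : Set (Lit V) := {m ∈ M | m.letter ∈ R}

lemma restrict_subset : restrict R M ⊆ M := fun _ h => h.1

lemma mem_iUnion_gen {d : NMUDefault V} (hd : d ∈ D)
    (hp : ∀ p ∈ d.pre, p ∈ ⋃ i, gen D W M i) (hn : d.concl.negate ∉ M) :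
    d.concl ∈ ⋃ i, gen D W M i := by
  have : ∃ i, ∀ p ∈ d.pre, p ∈ gen D W M i := by
    cases hpre : d.pre with
    | none => exact ⟨0, by simp [hpre]⟩
    | some p =>
      have hpM := hp p (by simp [hpre])
      simp only [Set.mem_iUnion] at hpM
      obtain ⟨i, hi⟩ := hpM
      exact ⟨i, by simp [hpre]; exact hi⟩
  obtain ⟨i, hi⟩ := this
  exact Set.mem_iUnion.2 ⟨i + 1, Or.inr ⟨d, hd, rfl, hi, hn⟩⟩

lemma fix_restrict (hR : ∀ x y, depEdge D x y → y ∈ R → x ∈ R) (h : Fix D W M) :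
    Fix {d ∈ D | d.concl.letter ∈ R} (restrict R W) (restrict R M) := by
  set DR := {d ∈ D | d.concl.letter ∈ R} with hDR
  set MR := restrict R M with hMR
  have hMsub : ∀ i, gen D W M i ⊆ M := by
    intro i
    conv_rhs => rw [h]
    exact Set.subset_iUnion (gen D W M) i
  -- (a): restriction of stages maps into restricted stages
  have ha : ∀ i, ∀ l ∈ gen D W M i, l.letter ∈ R → l ∈ gen DR (restrict R W) MR i := by
    intro i
    induction i with
    | zero => exact fun l hl hlR => ⟨hl, hlR⟩
    | succ i ih =>
      rintro l (hl | ⟨d, hd, rfl, hp, hn⟩) hlR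
      · exact Or.inl (ih l hl hlR)
      · refine Or.inr ⟨d, ⟨hd, hlR⟩, rfl, ?_, fun hc => hn hc.1⟩
        intro p hpd
        have hpR : p.letter ∈ R := by
          refine hR p.letter d.concl.letter ⟨d, hd, ⟨p, hpd, rfl⟩, rfl⟩ hlR
        exact ih p (hp p hpd) hpR
  -- (b): restricted stages map into stages
  have hb : ∀ i, ∀ l ∈ gen DR (restrict R W) MR i, l ∈ gen D W M i ∧ l.letter ∈ R := by
    intro i
    induction i with
    | zero => exact fun l hl => ⟨hl.1, hl.2⟩
    | succ i ih =>
      rintro l (hl | ⟨d, ⟨hd, hdR⟩, rfl, hp, hn⟩)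
      · obtain ⟨h1, h2⟩ := ih l hl
        exact ⟨Or.inl h1, h2⟩
      · refine ⟨Or.inr ⟨d, hd, rfl, fun p hpd => (ih p (hp p hpd)).1, ?_⟩, hdR⟩
        intro hc
        exact hn ⟨hc, hdR⟩
  apply Set.eq_of_subset_of_subset
  · intro m hm
    obtain ⟨i, hi⟩ := h.mem_iff.1 hm.1
    exact Set.mem_iUnion.2 ⟨i, ha i m hi hm.2⟩
  · apply Set.iUnion_subset
    intro i l hl
    obtain ⟨h1, h2⟩ := hb i l hl
    exact ⟨hMsub i h1, h2⟩

/-- The residual "top" theory used in the completion lemma. -/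
def Dtop (D : Set (NMUDefault V)) (R : Set V) (N : Set (Lit V)) : Set (NMUDefault V) :=
  {e | ∃ d ∈ D, d.concl.letter ∉ R ∧ e.concl = d.concl ∧
       ((e.pre = d.pre ∧ ∀ p ∈ d.pre, p.letter ∉ R) ∨
        (e.pre = none ∧ ∃ p, d.pre = some p ∧ p.letter ∈ R ∧ p ∈ N))}

lemma Dtop_finite (hD : D.Finite) (R : Set V) (N : Set (Lit V)) : (Dtop D R N).Finite := by
  apply (hD.union (hD.image (fun d => (⟨none, d.concl⟩ : NMUDefault V)))).subset
  rintro e ⟨d, hd, _, hconcl, hcase⟩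
  rcases hcase with ⟨hpre, _⟩ | ⟨hpre, _⟩
  · left
    have : e = d := by
      cases e; cases d
      simp_all
    rw [this]; exact hd
  · right
    refine ⟨d, hd, ?_⟩
    cases e
    simp_all

lemma fix_complete (hD : D.Finite) (hR : ∀ x y, depEdge D x y → y ∈ R → x ∈ R)
    {N : Set (Lit V)}
    (hN : Fix {d ∈ D | d.concl.letter ∈ R} (restrict R W) N) :
    ∃ M, Fix D W M ∧ restrict R M = N := by
  set DR := {d ∈ D | d.concl.letter ∈ R} with hDRdef
  have hNR : ∀ n ∈ N, n.letter ∈ R := by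
    intro n hn
    rcases hN.range hn with h1 | ⟨d, hd, rfl⟩
    · exact h1.2
    · exact hd.2
  set D' := Dtop D R N with hD'def
  set W' := {w ∈ W | w.letter ∉ R} with hW'def
  obtain ⟨K, hK⟩ := exists_fix (Dtop_finite hD R N) W'
  have hKR : ∀ k ∈ K, k.letter ∉ R := by
    intro k hk
    rcases hK.range hk with h1 | ⟨e, ⟨d, _, hdnR, hconcl, _⟩, rfl⟩
    · exact h1.2
    · rw [hconcl]; exact hdnR
  set M := N ∪ K with hMdef
  have hMres : restrict R M = N := by
    apply Set.eq_of_subset_of_subset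
    · rintro m ⟨hm | hm, hmR⟩
      · exact hm
      · exact absurd hmR (hKR m hm)
    · exact fun n hn => ⟨Or.inl hn, hNR n hn⟩
  refine ⟨M, ?_, hMres⟩
  -- first: N ⊆ ⋃ gen D W M
  have hNsub : N ⊆ ⋃ i, gen D W M i := by
    have : ∀ i, gen DR (restrict R W) N i ⊆ ⋃ j, gen D W M j := by
      intro i
      induction i with
      | zero => exact fun l hl => Set.mem_iUnion.2 ⟨0, hl.1⟩
      | succ i ih =>
        rintro l (hl | ⟨d, ⟨hd, hdR⟩, rfl, hp, hn⟩)
        · exact ih hl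
        · refine mem_iUnion_gen hd (fun p hpd => ih (hp p hpd)) ?_
          intro hc
          rcases hc with hc | hc
          · exact hn hc
          · exact hKR _ hc hdR
    intro n hn
    obtain ⟨i, hi⟩ := hN.mem_iff.1 hn
    exact this i hi
  have hKsub : K ⊆ ⋃ i, gen D W M i := by
    have : ∀ i, gen D' W' K i ⊆ ⋃ j, gen D W M j := by
      intro i
      induction i with
      | zero => exact fun l hl => Set.mem_iUnion.2 ⟨0, hl.1⟩
      | succ i ih =>
        rintro l (hl | ⟨e, ⟨d, hd, hdnR, hconcl, hcase⟩, rfl, hp, hn⟩)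
        · exact ih hl
        · rw [hconcl] at hn ⊢
          have hnM : d.concl.negate ∉ M := by
            intro hc
            rcases hc with hc | hc
            · have := hNR _ hc
              rw [Lit.negate_letter] at this
              exact hdnR this
            · exact hn hc
          refine mem_iUnion_gen hd ?_ hnM
          intro p hpd
          rcases hcase with ⟨hpre_eq, _⟩ | ⟨_, q, hdq, hqR, hqN⟩
          · exact ih (hp p (hpre_eq ▸ hpd))
          · rw [hdq] at hpd
            exact hNsub ((Option.mem_some_iff.mp hpd) ▸ hqN)
    intro k hk
    obtain ⟨i, hi⟩ := hK.mem_iff.1 hk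
    exact this i hi
  -- now the fixpoint equality
  apply Set.eq_of_subset_of_subset
  · rintro m (hm | hm)
    · exact hNsub hm
    · exact hKsub hm
  · apply Set.iUnion_subset
    intro i
    induction i with
    | zero =>
      intro w hw
      by_cases hwR : w.letter ∈ R
      · exact Or.inl (hN.w_subset ⟨hw, hwR⟩)
      · exact Or.inr (hK.w_subset ⟨hw, hwR⟩)
    | succ i ih =>
      rintro l (hl | ⟨d, hd, rfl, hp, hn⟩)
      · exact ih hl
      · by_cases hcR : d.concl.letter ∈ R
        · -- use the bottom fixpoint N
          have hpre : ∀ p ∈ d.pre, p ∈ N := by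
            intro p hpd
            have hpM : p ∈ M := ih (hp p hpd)
            have hpR : p.letter ∈ R :=
              hR p.letter d.concl.letter ⟨d, hd, ⟨p, hpd, rfl⟩, rfl⟩ hcR
            rcases hpM with h1 | h1
            · exact h1
            · exact absurd hpR (hKR p h1)
          have hnN : d.concl.negate ∉ N := fun hc => hn (Or.inl hc)
          exact Or.inl (hN.closed ⟨hd, hcR⟩ hpre hnN)
        · -- use the top fixpoint K
          have hnK : d.concl.negate ∉ K := fun hc => hn (Or.inr hc)
          cases hdp : d.pre with
          | none =>
            have hdD' : d ∈ D' := ⟨d, hd, hcR, rfl, Or.inl ⟨rfl, by simp [hdp]⟩⟩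
            refine Or.inr (hK.closed hdD' ?_ hnK)
            intro p hpd
            rw [hdp] at hpd
            exact absurd hpd (by simp)
          | some p =>
            have hpM : p ∈ M := ih (hp p (by rw [hdp]; rfl))
            by_cases hpR : p.letter ∈ R
            · have hpN : p ∈ N := by
                rcases hpM with h1 | h1
                · exact h1
                · exact absurd hpR (hKR p h1)
              have heD' : (⟨none, d.concl⟩ : NMUDefault V) ∈ D' :=
                ⟨d, hd, hcR, rfl, Or.inr ⟨rfl, p, hdp, hpR, hpN⟩⟩
              refine Or.inr (hK.closed (d := ⟨none, d.concl⟩) heD' ?_ hnK)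
              intro q hq
              exact absurd hq (by simp)
            · have hpK : p ∈ K := by
                rcases hpM with h1 | h1
                · exact absurd (hNR p h1) hpR
                · exact h1
              have hdD' : d ∈ D' := by
                refine ⟨d, hd, hcR, rfl, Or.inl ⟨rfl, ?_⟩⟩
                intro q hq
                rw [hdp] at hq
                exact (Option.mem_some_iff.mp hq) ▸ hpR
              refine Or.inr (hK.closed hdD' ?_ hnK)
              intro q hq
              rw [hdp] at hq
              exact (Option.mem_some_iff.mp hq) ▸ hpK

end OWAux
namespace OWAux

variable {V : Type}

lemma subset_logClosure (T : Set (Form V)) : T ⊆ logClosure T :=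
  fun φ hφ v hv => hv φ hφ

lemma logClosure_mono {T U : Set (Form V)} (h : T ⊆ U) : logClosure T ⊆ logClosure U :=
  fun φ hφ v hv => hφ v (fun ψ hψ => hv ψ (h hψ))

lemma logClosure_logClosure (T : Set (Form V)) : logClosure (logClosure T) ⊆ logClosure T :=
  fun φ hφ v hv => hφ v (fun ψ hψ => hψ v hv)

lemma sat_neg_toForm (v : V → Prop) (l : Lit V) :
    Form.sat v (Form.neg l.toForm) ↔ Form.sat v l.negate.toForm := by
  cases l with
  | mk a b => cases b <;> simp [Lit.toForm, Lit.negate, Form.sat, not_not]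

lemma mem_logClosure_neg_iff {T : Set (Form V)} (l : Lit V) :
    Form.neg l.toForm ∈ logClosure T ↔ l.negate.toForm ∈ logClosure T := by
  constructor <;> intro h v hv
  · exact (sat_neg_toForm v l).mp (h v hv)
  · exact (sat_neg_toForm v l).mpr (h v hv)

lemma mem_logClosure_iff {M : Set (Lit V)} (hM : LitConsistent M) (l : Lit V) :
    l.toForm ∈ logClosure (Lit.toForm '' M) ↔ l ∈ M := by
  constructor
  · intro h
    by_contra hlM
    obtain ⟨a, b⟩ := l
    cases b
    · have hs : Form.sat (fun x => (⟨x, false⟩ : Lit V) ∉ M)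
          (Lit.toForm ⟨a, false⟩) := by
        apply h
        rintro ψ ⟨m, hm, rfl⟩
        obtain ⟨c, e⟩ := m
        cases e
        · exact fun hc => hc hm
        · show (⟨c, false⟩ : Lit V) ∉ M
          have h2 := hM _ hm
          simpa [Lit.negate] using h2
      have hs' : ¬ ((⟨a, false⟩ : Lit V) ∉ M) := hs
      exact hlM (not_not.mp hs')
    · have hs : Form.sat (fun x => (⟨x, true⟩ : Lit V) ∈ M)
          (Lit.toForm ⟨a, true⟩) := by
        apply h
        rintro ψ ⟨m, hm, rfl⟩
        obtain ⟨c, e⟩ := m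
        cases e
        · show ¬ (⟨c, true⟩ : Lit V) ∈ M
          have h2 := hM _ hm
          simpa [Lit.negate] using h2
        · exact hm
      exact hlM hs
  · intro h
    exact subset_logClosure _ ⟨l, h, rfl⟩

/-- `φ` is the formula of a literal. -/
def IsLitForm (φ : Form V) : Prop := ∃ l : Lit V, φ = l.toForm

lemma not_isLitForm_negneg (a : V) : ¬ IsLitForm (Form.neg (Form.neg (Form.atom a))) := by
  rintro ⟨l, hl⟩
  obtain ⟨x, b⟩ := l
  cases b <;> simp [Lit.toForm] at hl

section Ext

variable {D : Set (NMUDefault V)} {W : Set (Lit V)} {E : Set (Form V)}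

lemma extStage_succ_subset (i : ℕ) :
    extStage (NMUDefault.toDefault '' D) (Lit.toForm '' W) E i ⊆
      extStage (NMUDefault.toDefault '' D) (Lit.toForm '' W) E (i + 1) :=
  fun φ hφ => Or.inl (subset_logClosure _ hφ)

lemma negnegE (hE : E = ⋃ i, extStage (NMUDefault.toDefault '' D) (Lit.toForm '' W) E i)
    (a : V) : Form.neg (Form.neg (Form.atom a)) ∈ E ↔ Form.atom a ∈ E := by
  constructor
  · intro h
    rw [hE] at h
    obtain ⟨i, hi⟩ := Set.mem_iUnion.mp h
    cases i with
    | zero =>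
      obtain ⟨l, _, hl⟩ := hi
      exact absurd ⟨l, hl.symm⟩ (not_isLitForm_negneg a)
    | succ i =>
      rcases hi with hi | ⟨dg, ⟨d, _, rfl⟩, hconcl, _, _⟩
      · have h1 : Form.atom a ∈
            logClosure (extStage (NMUDefault.toDefault '' D) (Lit.toForm '' W) E i) := by
          intro v hv
          have := hi v hv
          simpa [Form.sat, not_not] using this
        rw [hE]
        exact Set.mem_iUnion.mpr ⟨i + 1, Or.inl h1⟩
      · exact absurd ⟨d.concl, hconcl.symm⟩ (not_isLitForm_negneg a)
  · intro h
    rw [hE] at h ⊢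
    obtain ⟨i, hi⟩ := Set.mem_iUnion.mp h
    refine Set.mem_iUnion.mpr ⟨i + 1, Or.inl ?_⟩
    intro v hv
    have := hv _ hi
    simpa [Form.sat, not_not] using this

lemma negE (hE : E = ⋃ i, extStage (NMUDefault.toDefault '' D) (Lit.toForm '' W) E i)
    (l : Lit V) : Form.neg l.toForm ∈ E ↔ l.negate.toForm ∈ E := by
  obtain ⟨a, b⟩ := l
  cases b
  · simpa [Lit.toForm, Lit.negate] using negnegE (D := D) (W := W) hE a
  · simp [Lit.toForm, Lit.negate]

theorem fix_of_ext (hW : LitConsistent W) (hEx : NMU.IsExtension D W E) :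
    Fix D W {l : Lit V | l.toForm ∈ E} := by
  have hE : E = ⋃ i, extStage (NMUDefault.toDefault '' D) (Lit.toForm '' W) E i := hEx
  set ME : Set (Lit V) := {l | l.toForm ∈ E} with hMEdef
  set G : Set (Lit V) := ⋃ i, gen D W ME i with hGdef
  have hstep1 : ∀ i, ∀ l ∈ gen D W ME i,
      l.toForm ∈ extStage (NMUDefault.toDefault '' D) (Lit.toForm '' W) E i := by
    intro i
    induction i with
    | zero => exact fun l hl => ⟨l, hl, rfl⟩
    | succ i ih =>
      rintro l (hl | ⟨d, hd, rfl, hp, hn⟩)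
      · exact extStage_succ_subset i (ih l hl)
      · refine Or.inr ⟨d.toDefault, ⟨d, hd, rfl⟩, rfl, ?_, ?_⟩
        · intro aφ haφ
          cases hdp : d.pre with
          | none =>
            rw [show d.toDefault.pre = d.pre.map Lit.toForm from rfl, hdp] at haφ
            exact absurd haφ (by simp)
          | some p =>
            rw [show d.toDefault.pre = d.pre.map Lit.toForm from rfl, hdp] at haφ
            have haeq : aφ = p.toForm := by
              simpa [eq_comm] using haφ
            rw [haeq]
            exact ih p (hp p (by rw [hdp]; rfl))
        · intro bφ hbφ
          have hbeq : bφ = d.concl.toForm := by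
            simpa [NMUDefault.toDefault] using hbφ
          rw [hbeq]
          intro hcon
          exact hn ((negE hE d.concl).mp hcon)
  have hGsub : G ⊆ ME := by
    intro l hl
    obtain ⟨i, hi⟩ := Set.mem_iUnion.mp hl
    show l.toForm ∈ E
    rw [hE]
    exact Set.mem_iUnion.mpr ⟨i, hstep1 i l hi⟩
  have hGcons : LitConsistent G := by
    intro l hl hnl
    obtain ⟨i, hi⟩ := Set.mem_iUnion.mp hl
    obtain ⟨j, hj⟩ := Set.mem_iUnion.mp hnl
    rcases gen_added hi with h1 | h1
    · rcases gen_added hj with h2 | h2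
      · exact hW l h1 h2
      · rw [Lit.negate_negate] at h2
        exact h2 (hGsub hl)
    · exact h1 (hGsub hnl)
  have hstep3 : ∀ i, extStage (NMUDefault.toDefault '' D) (Lit.toForm '' W) E i ⊆
      logClosure (Lit.toForm '' G) := by
    intro i
    induction i with
    | zero =>
      rintro φ ⟨l, hl, rfl⟩
      exact subset_logClosure _ ⟨l, Set.mem_iUnion.mpr ⟨0, hl⟩, rfl⟩
    | succ i ih =>
      rintro φ (hφ | ⟨dg, ⟨d, hd, rfl⟩, hconcl, hpre, hjust⟩)
      · exact logClosure_logClosure _ (logClosure_mono ih hφ)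
      · rw [← hconcl]
        have hpre' : ∃ j, ∀ p ∈ d.pre, p ∈ gen D W ME j := by
          cases hdp : d.pre with
          | none => exact ⟨0, by simp [hdp]⟩
          | some p =>
            have hpφ : p.toForm ∈
                extStage (NMUDefault.toDefault '' D) (Lit.toForm '' W) E i := by
              apply hpre
              rw [show d.toDefault.pre = d.pre.map Lit.toForm from rfl, hdp]
              simp
            have hpG : p ∈ G := (mem_logClosure_iff hGcons p).mp (ih hpφ)
            obtain ⟨j, hj⟩ := Set.mem_iUnion.mp hpG
            exact ⟨j, by simp [hdp]; exact hj⟩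
        obtain ⟨j, hj⟩ := hpre'
        have hnegME : d.concl.negate ∉ ME := by
          intro hc
          have h1 : d.concl.negate.toForm ∈ E := hc
          have h2 : Form.neg d.concl.toForm ∈ E := (negE hE d.concl).mpr h1
          exact hjust d.concl.toForm (by simp [NMUDefault.toDefault]) h2
        have hconclG : d.concl ∈ gen D W ME (j + 1) := Or.inr ⟨d, hd, rfl, hj, hnegME⟩
        exact subset_logClosure _ ⟨d.concl, Set.mem_iUnion.mpr ⟨j + 1, hconclG⟩, rfl⟩
  have hMEsub : ME ⊆ G := by
    intro l hl
    have h1 : l.toForm ∈ E := hl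
    rw [hE] at h1
    obtain ⟨i, hi⟩ := Set.mem_iUnion.mp h1
    exact (mem_logClosure_iff hGcons l).mp (hstep3 i hi)
  show ME = ⋃ i, gen D W ME i
  exact Set.eq_of_subset_of_subset hMEsub hGsub

theorem ext_of_fix (hW : LitConsistent W) (hWf : W.Finite) (hD : D.Finite)
    {M : Set (Lit V)} (hfix : Fix D W M) :
    NMU.IsExtension D W (logClosure (Lit.toForm '' M)) := by
  set E := logClosure (Lit.toForm '' M) with hEdef
  have hMcons := hfix.consistent hW
  have hMfin : M.Finite := by
    apply (hWf.union (hD.image NMUDefault.concl)).subset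
    intro m hm
    rcases hfix.range hm with h | ⟨d, hd, rfl⟩
    · exact Or.inl h
    · exact Or.inr ⟨d, hd, rfl⟩
  have hstab : ∃ n, M ⊆ gen D W M n := by
    have key : ∀ s : Set (Lit V), s.Finite → s ⊆ M → ∃ n, s ⊆ gen D W M n := by
      intro s hs
      refine Set.Finite.induction_on (motive := fun s _ => s ⊆ M → ∃ n, s ⊆ gen D W M n) s hs ?_ ?_
      · exact fun _ => ⟨0, Set.empty_subset _⟩
      · intro a s' ha hsfin ih hsub
        obtain ⟨n1, hn1⟩ := ih (fun x hx => hsub (Set.mem_insert_of_mem _ hx))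
        obtain ⟨n2, hn2⟩ := hfix.mem_iff.1 (hsub (Set.mem_insert _ _))
        refine ⟨max n1 n2, ?_⟩
        rintro x (rfl | hx)
        · exact gen_mono (le_max_right n1 n2) hn2
        · exact gen_mono (le_max_left n1 n2) (hn1 hx)
    exact key M hMfin subset_rfl
  obtain ⟨n, hn⟩ := hstab
  -- images of gen stages sit inside extension stages
  have hgen_st : ∀ i, Lit.toForm '' gen D W M i ⊆
      extStage (NMUDefault.toDefault '' D) (Lit.toForm '' W) E i := by
    intro i
    induction i with
    | zero => exact fun φ hφ => hφ
    | succ i ih =>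
      rintro φ ⟨l, hl, rfl⟩
      rcases hl with hl | ⟨d, hd, rfl, hp, hnl⟩
      · exact extStage_succ_subset i (ih ⟨l, hl, rfl⟩)
      · refine Or.inr ⟨d.toDefault, ⟨d, hd, rfl⟩, rfl, ?_, ?_⟩
        · intro aφ haφ
          cases hdp : d.pre with
          | none =>
            rw [show d.toDefault.pre = d.pre.map Lit.toForm from rfl, hdp] at haφ
            exact absurd haφ (by simp)
          | some p =>
            rw [show d.toDefault.pre = d.pre.map Lit.toForm from rfl, hdp] at haφ
            have haeq : aφ = p.toForm := by simpa [eq_comm] using haφ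
            rw [haeq]
            exact ih ⟨p, hp p (by rw [hdp]; rfl), rfl⟩
        · intro bφ hbφ
          have hbeq : bφ = d.concl.toForm := by
            simpa [NMUDefault.toDefault] using hbφ
          rw [hbeq]
          intro hcon
          have h1 : d.concl.negate.toForm ∈ E :=
            (mem_logClosure_neg_iff d.concl).mp hcon
          exact hnl ((mem_logClosure_iff hMcons _).mp h1)
  show E = ⋃ i, extStage (NMUDefault.toDefault '' D) (Lit.toForm '' W) E i
  apply Set.eq_of_subset_of_subset
  · -- E ⊆ union of stages
    intro φ hφ
    have h1 : Lit.toForm '' M ⊆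
        extStage (NMUDefault.toDefault '' D) (Lit.toForm '' W) E n := by
      rintro ψ ⟨l, hl, rfl⟩
      exact hgen_st n ⟨l, hn hl, rfl⟩
    have h2 : φ ∈ logClosure
        (extStage (NMUDefault.toDefault '' D) (Lit.toForm '' W) E n) :=
      logClosure_mono h1 hφ
    exact Set.mem_iUnion.mpr ⟨n + 1, Or.inl h2⟩
  · apply Set.iUnion_subset
    intro i
    induction i with
    | zero =>
      rintro φ ⟨l, hl, rfl⟩
      exact subset_logClosure _ ⟨l, hfix.w_subset hl, rfl⟩
    | succ i ih =>
      rintro φ (hφ | ⟨dg, ⟨d, hd, rfl⟩, hconcl, hpre, hjust⟩)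
      · exact logClosure_logClosure _ (logClosure_mono ih hφ)
      · rw [← hconcl]
        have hpM : ∀ p ∈ d.pre, p ∈ M := by
          intro p hpd
          have hpφ : p.toForm ∈
              extStage (NMUDefault.toDefault '' D) (Lit.toForm '' W) E i := by
            apply hpre
            cases hdp : d.pre with
            | none => rw [hdp] at hpd; exact absurd hpd (by simp)
            | some q =>
              rw [hdp] at hpd
              rw [show d.toDefault.pre = d.pre.map Lit.toForm from rfl, hdp]
              rw [Option.mem_some_iff.mp hpd]
              simp
          exact (mem_logClosure_iff hMcons p).mp (ih hpφ)
        have hnM : d.concl.negate ∉ M := by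
          intro hc
          have h1 : d.concl.negate.toForm ∈ E := subset_logClosure _ ⟨_, hc, rfl⟩
          have h2 : Form.neg d.concl.toForm ∈ E := (mem_logClosure_neg_iff d.concl).mpr h1
          exact hjust d.concl.toForm (by simp [NMUDefault.toDefault]) h2
        have : d.concl ∈ M := hfix.closed hd hpM hnM
        exact subset_logClosure _ ⟨d.concl, this, rfl⟩

/-- Characterization of NMU entailment via combinatorial fixpoints. -/
theorem entails_iff (hW : LitConsistent W) (hWf : W.Finite) (hD : D.Finite) (t : Lit V) :
    NMU.entails D W t ↔ ∀ M, Fix D W M → t ∈ M := by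
  constructor
  · intro h M hfix
    have hE := ext_of_fix hW hWf hD hfix
    have h1 := h _ hE
    exact (mem_logClosure_iff (hfix.consistent hW) t).mp h1
  · intro h E hE
    exact h _ (fix_of_ext hW hE)

end Ext

end OWAux
namespace OWAux

variable {V : Type}

lemma litConsistent_mono {S T : Set (Lit V)} (h : S ⊆ T) (hT : LitConsistent T) :
    LitConsistent S :=
  fun l hl hnl => hT l (h hl) (h hnl)

/-- Relevance lemma: adding literals whose letters do not reach `t.letter` does not
change entailment of `t`. -/
theorem relevance {D : Set (NMUDefault V)} {W X : Set (Lit V)} (hD : D.Finite)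
    (hWf : W.Finite) (hXf : X.Finite) (hcons : LitConsistent (W ∪ X))
    (t : Lit V) (hX : ∀ x ∈ X, ¬ depReach D x.letter t.letter) :
    NMU.entails D W t ↔ NMU.entails D (W ∪ X) t := by
  have hWcons : LitConsistent W := litConsistent_mono Set.subset_union_left hcons
  set R : Set V := {x | depReach D x t.letter} with hRdef
  have hR : ∀ x y, depEdge D x y → y ∈ R → x ∈ R := fun x y hxy hy =>
    Relation.ReflTransGen.head hxy hy
  have hres : restrict R (W ∪ X) = restrict R W := by
    apply Set.eq_of_subset_of_subset
    · rintro m ⟨hm | hm, hmR⟩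
      · exact ⟨hm, hmR⟩
      · exact absurd hmR (hX m hm)
    · exact fun m hm => ⟨Or.inl hm.1, hm.2⟩
  have htR : t.letter ∈ R := Relation.ReflTransGen.refl
  rw [entails_iff hWcons hWf hD, entails_iff hcons (hWf.union hXf) hD]
  constructor
  · intro h M hfixM
    have h1 := fix_restrict hR hfixM
    rw [hres] at h1
    obtain ⟨M', hfixM', hM'res⟩ := fix_complete hD hR h1
    have h2 : t ∈ restrict R M' := ⟨h M' hfixM', htR⟩
    rw [hM'res] at h2
    exact h2.1
  · intro h M hfixM
    have h1 := fix_restrict hR hfixM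
    rw [← hres] at h1
    obtain ⟨M', hfixM', hM'res⟩ := fix_complete hD hR h1
    have h2 : t ∈ restrict R M' := ⟨h M' hfixM', htR⟩
    rw [hM'res] at h2
    exact h2.1

end OWAux
open OWAux in
/-- If the consistent NMU theory `(D, W)` has tightness `c` (every set of letters occurring in
the theory and lying in a single SCC of the atomic dependency graph has at most `c` elements),
then every minimal strong outlier witness set `S` for `L` in `(D, W)` has size at most `c`. -/
theorem minimal_strong_witness_card_le {V : Type} (D : Set (NMUDefault V)) (W : Set (Lit V))
    (L S : Set (Lit V)) (c : ℕ) (hD : D.Finite) (hW : W.Finite)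
    (hcons : LitConsistent W) (hL : L ⊆ W)
    (htight : ∀ A : Finset V, (∀ a ∈ A, occursIn D W a) →
      (∀ a ∈ A, ∀ b ∈ A, depReach D a b) → A.card ≤ c)
    (hwit : NMUStrongWitness D W L S)
    (hmin : ∀ S' ⊆ S, S' ≠ S → ¬ NMUStrongWitness D W L S') :
    S.ncard ≤ c := by
  classical
  obtain ⟨hSne, hSsub, hent, hnent⟩ := hwit
  have hSW : S ⊆ W := fun s hs => (hSsub hs).1
  have hSfin : S.Finite := hW.subset hSW
  -- every member of S reaches every member of S in the dependency graph
  have key : ∀ l ∈ S, ∀ s ∈ S, depReach D s.letter l.letter := by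
    intro l hl
    set Sl : Set (Lit V) := {s ∈ S | depReach D s.letter l.letter} with hSldef
    have hSlsub : Sl ⊆ S := fun s hs => hs.1
    have hlSl : l ∈ Sl := ⟨hl, Relation.ReflTransGen.refl⟩
    have hXirr : ∀ x ∈ S \ Sl, ∀ t ∈ Sl, ¬ depReach D x.letter t.letter := by
      intro x hx t ht hreach
      exact hx.2 ⟨hx.1, hreach.trans ht.2⟩
    have hW1 : W \ Sl = (W \ S) ∪ (S \ Sl) := by
      ext x
      constructor
      · rintro ⟨hxW, hxSl⟩
        by_cases hxS : x ∈ S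
        · exact Or.inr ⟨hxS, hxSl⟩
        · exact Or.inl ⟨hxW, hxS⟩
      · rintro (⟨hxW, hxS⟩ | ⟨hxS, hxSl⟩)
        · exact ⟨hxW, fun hc => hxS (hSlsub hc)⟩
        · exact ⟨hSW hxS, hxSl⟩
    have hW2 : W \ (Sl ∪ L) = (W \ (S ∪ L)) ∪ (S \ Sl) := by
      ext x
      constructor
      · rintro ⟨hxW, hxc⟩
        by_cases hxS : x ∈ S
        · exact Or.inr ⟨hxS, fun hc => hxc (Or.inl hc)⟩
        · refine Or.inl ⟨hxW, ?_⟩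
          rintro (hc | hc)
          · exact hxS hc
          · exact hxc (Or.inr hc)
      · rintro (⟨hxW, hxSL⟩ | ⟨hxS, hxSl⟩)
        · refine ⟨hxW, ?_⟩
          rintro (hc | hc)
          · exact hxSL (Or.inl (hSlsub hc))
          · exact hxSL (Or.inr hc)
        · refine ⟨hSW hxS, ?_⟩
          rintro (hc | hc)
          · exact hxSl hc
          · exact (hSsub hxS).2 hc
    have hXfin : (S \ Sl).Finite := hSfin.subset Set.diff_subset
    have hSlwit : NMUStrongWitness D W L Sl := by
      refine ⟨⟨l, hlSl⟩, fun s hs => hSsub (hSlsub hs), ?_, ?_⟩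
      · intro s hs
        have hrel := relevance (W := W \ S) (X := S \ Sl) hD (hW.subset Set.diff_subset) hXfin
          (litConsistent_mono (by
            rintro x (hx | hx)
            · exact hx.1
            · exact hSW hx.1) hcons)
          s.negate
          (by
            intro x hx
            rw [Lit.negate_letter]
            exact hXirr x hx s hs)
        rw [hW1]
        exact hrel.mp (hent s (hSlsub hs))
      · intro s hs hcontra
        have hrel := relevance (W := W \ (S ∪ L)) (X := S \ Sl) hD (hW.subset Set.diff_subset) hXfin
          (litConsistent_mono (by
            rintro x (hx | hx)
            · exact hx.1
            · exact hSW hx.1) hcons)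
          s.negate
          (by
            intro x hx
            rw [Lit.negate_letter]
            exact hXirr x hx s hs)
        rw [hW2] at hcontra
        exact hnent s (hSlsub hs) (hrel.mpr hcontra)
    have hSlS : Sl = S := by
      by_contra hne
      exact hmin Sl hSlsub hne hSlwit
    intro s hs
    have : s ∈ Sl := hSlS ▸ hs
    exact this.2
  -- letters are injective on S
  have hinj : Set.InjOn Lit.letter S := by
    intro s hs s' hs' heq
    by_contra hne
    have hsneg : s' = s.negate := by
      obtain ⟨a, b⟩ := s
      obtain ⟨a', b'⟩ := s'
      simp only [Lit.negate]
      have heq' : a = a' := heq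
      cases b <;> cases b' <;> simp_all
    exact hcons s (hSW hs) (hsneg ▸ hSW hs')
  have hfinimg : (Lit.letter '' S).Finite := hSfin.image _
  have h1 := htight hfinimg.toFinset ?_ ?_
  · have h2 : S.ncard = (Lit.letter '' S).ncard := (Set.ncard_image_of_injOn hinj).symm
    have h3 : (Lit.letter '' S).ncard = hfinimg.toFinset.card := by
      rw [Set.ncard_eq_toFinset_card _ hfinimg]
    omega
  · intro a ha
    rw [Set.Finite.mem_toFinset] at ha
    obtain ⟨s, hsS, rfl⟩ := ha
    exact Or.inl ⟨s, hSW hsS, rfl⟩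
  · intro a ha b hb
    rw [Set.Finite.mem_toFinset] at ha hb
    obtain ⟨s, hsS, rfl⟩ := ha
    obtain ⟨s', hs'S, rfl⟩ := hb
    exact key s' hs'S s hsS
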